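/- (FKG theorem for two-point spaces) If P is a probability on {0,1}^Λ, Λ finite, satisfying the FKG lattice condition P(ω∨ω')P(ω∧ω') ≥ P(ω)P(ω') for all ω, ω', then P is positively associated: for all increasing events A, B ⊆ {0,1}^Λ, P(A ∩ B) ≥ P(A)·P(B). -/

import Mathlib

lemma AD_bool (f g h k : Bool → ℝ)
    (hf : ∀ x, 0 ≤ f x) (hg : ∀ x, 0 ≤ g x) (hh : ∀ x, 0 ≤ h x) (hk : ∀ x, 0 ≤ k x)
    (hyp : ∀ x y, f x * g y ≤ h (x || y) * k (x && y)) :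
    (f false + f true) * (g false + g true) ≤ (h false + h true) * (k false + k true) := by
  have h00 := hyp false false
  have h01 := hyp false true
  have h10 := hyp true false
  have h11 := hyp true true
  simp only [Bool.or_self, Bool.and_self, Bool.or_true, Bool.true_or, Bool.and_true,
    Bool.true_and, Bool.false_and, Bool.and_false, Bool.false_or, Bool.or_false] at *
  rcases (mul_nonneg (hh true) (hk false)).lt_or_eq with hpos | hzero
  · have key : h true * k false * (f false * g true + f true * g false)
        ≤ h true * k false * (h true * k false + h false * k true) := by
      nlinarith [mul_nonneg (hf false) (hg true), mul_nonneg (hf true) (hg false),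
        mul_nonneg (hf false) (hg false), mul_nonneg (hf true) (hg true),
        mul_nonneg (hh false) (hk false), mul_nonneg (hh true) (hk true),
        mul_nonneg (mul_nonneg (hh true) (hk false)) (mul_nonneg (hh false) (hk true)),
        mul_le_mul h00 h11 (mul_nonneg (hf true) (hg true)) (mul_nonneg (hh false) (hk false)),
        mul_nonneg (mul_nonneg (hf false) (hg true)) (mul_nonneg (hf true) (hg false))]
    have key2 : f false * g true + f true * g false ≤ h true * k false + h false * k true :=
      le_of_mul_le_mul_left key hpos
    nlinarith
  · have e1 : f false * g true = 0 :=
      le_antisymm (by rw [← hzero] at h01; exact h01) (mul_nonneg (hf false) (hg true))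
    have e2 : f true * g false = 0 :=
      le_antisymm (by rw [← hzero] at h10; exact h10) (mul_nonneg (hf true) (hg false))
    nlinarith [mul_nonneg (hh false) (hk true), mul_nonneg (hh true) (hk true),
      mul_nonneg (hh false) (hk false), mul_nonneg (hh true) (hk false)]

lemma cons_or {n : ℕ} (x y : Bool) (ω ω' : Fin n → Bool) :
    (fun i => (Fin.cons x ω : Fin (n + 1) → Bool) i || (Fin.cons y ω' : Fin (n + 1) → Bool) i)
      = (Fin.cons (x || y) (fun i => ω i || ω' i) : Fin (n + 1) → Bool) := by
  funext i
  refine Fin.cases ?_ (fun j => ?_) i <;> simp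

lemma cons_and {n : ℕ} (x y : Bool) (ω ω' : Fin n → Bool) :
    (fun i => (Fin.cons x ω : Fin (n + 1) → Bool) i && (Fin.cons y ω' : Fin (n + 1) → Bool) i)
      = (Fin.cons (x && y) (fun i => ω i && ω' i) : Fin (n + 1) → Bool) := by
  funext i
  refine Fin.cases ?_ (fun j => ?_) i <;> simp

lemma sum_cons_split {n : ℕ} (f : (Fin (n + 1) → Bool) → ℝ) :
    ∑ ω : Fin (n + 1) → Bool, f ω
      = ∑ ω : Fin n → Bool, (f (Fin.cons false ω) + f (Fin.cons true ω)) := by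
  rw [← (Fin.consEquiv (fun _ : Fin (n + 1) => Bool)).sum_comp f]
  rw [Fintype.sum_prod_type_right]
  refine Finset.sum_congr rfl fun ω _ => ?_
  simp [Fin.consEquiv, Fintype.sum_bool, add_comm]

lemma AD_fin : ∀ (n : ℕ) (f g h k : (Fin n → Bool) → ℝ),
    (∀ ω, 0 ≤ f ω) → (∀ ω, 0 ≤ g ω) → (∀ ω, 0 ≤ h ω) → (∀ ω, 0 ≤ k ω) →
    (∀ ω ω', f ω * g ω' ≤ h (fun i => ω i || ω' i) * k (fun i => ω i && ω' i)) →
    (∑ ω, f ω) * (∑ ω, g ω) ≤ (∑ ω, h ω) * (∑ ω, k ω) := by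
  intro n
  induction n with
  | zero =>
    intro f g h k hf hg hh hk hyp
    haveI : Subsingleton (Fin 0 → Bool) := ⟨fun a b => funext fun i => i.elim0⟩
    have hd : ∀ (F : (Fin 0 → Bool) → ℝ), ∑ ω, F ω = F default := fun F =>
      Fintype.sum_subsingleton F default
    rw [hd f, hd g, hd h, hd k]
    have := hyp default default
    convert this using 3 <;> first | rfl | exact Subsingleton.elim _ _
  | succ n ih =>
    intro f g h k hf hg hh hk hyp
    rw [sum_cons_split f, sum_cons_split g, sum_cons_split h, sum_cons_split k]
    apply ih
    · intro ω; exact add_nonneg (hf _) (hf _)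
    · intro ω; exact add_nonneg (hg _) (hg _)
    · intro ω; exact add_nonneg (hh _) (hh _)
    · intro ω; exact add_nonneg (hk _) (hk _)
    · intro ω ω'
      apply AD_bool (fun x => f (Fin.cons x ω)) (fun y => g (Fin.cons y ω'))
        (fun z => h (Fin.cons z (fun i => ω i || ω' i)))
        (fun z => k (Fin.cons z (fun i => ω i && ω' i)))
        (fun x => hf _) (fun x => hg _) (fun x => hh _) (fun x => hk _)
      intro x y
      have := hyp (Fin.cons x ω) (Fin.cons y ω')
      rwa [cons_or, cons_and] at this

lemma AD {Λ : Type*} [Fintype Λ] [DecidableEq Λ] (f g h k : (Λ → Bool) → ℝ)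
    (hf : ∀ ω, 0 ≤ f ω) (hg : ∀ ω, 0 ≤ g ω) (hh : ∀ ω, 0 ≤ h ω) (hk : ∀ ω, 0 ≤ k ω)
    (hyp : ∀ ω ω', f ω * g ω' ≤ h (fun i => ω i || ω' i) * k (fun i => ω i && ω' i)) :
    (∑ ω, f ω) * (∑ ω, g ω) ≤ (∑ ω, h ω) * (∑ ω, k ω) := by
  classical
  let e := Fintype.equivFin Λ
  let E : (Λ → Bool) ≃ (Fin (Fintype.card Λ) → Bool) :=
    Equiv.arrowCongr e (Equiv.refl Bool)
  have hsum : ∀ (F : (Λ → Bool) → ℝ), ∑ ω, F ω = ∑ ω', F (ω' ∘ e) := by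
    intro F
    rw [← E.sum_comp (fun ω' => F (ω' ∘ e))]
    refine Finset.sum_congr rfl fun ω _ => ?_
    congr 1
    funext i
    simp [E, Equiv.arrowCongr]
  rw [hsum f, hsum g, hsum h, hsum k]
  apply AD_fin
  · intro ω; exact hf _
  · intro ω; exact hg _
  · intro ω; exact hh _
  · intro ω; exact hk _
  · intro ω ω'
    exact hyp (ω ∘ e) (ω' ∘ e)

theorem fkg_theorem {Λ : Type*} [Fintype Λ] [DecidableEq Λ]
    (P : (Λ → Bool) → ℝ) (h0 : ∀ ω, 0 ≤ P ω) (h1 : ∑ ω : Λ → Bool, P ω = 1)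
    (hfkg : ∀ ω ω' : Λ → Bool,
      P ω * P ω' ≤ P (fun i => ω i || ω' i) * P (fun i => ω i && ω' i))
    (A B : Finset (Λ → Bool))
    (hA : ∀ ω ∈ A, ∀ ω' : Λ → Bool, ω ≤ ω' → ω' ∈ A)
    (hB : ∀ ω ∈ B, ∀ ω' : Λ → Bool, ω ≤ ω' → ω' ∈ B) :
    (∑ ω ∈ A, P ω) * (∑ ω ∈ B, P ω) ≤ ∑ ω ∈ A ∩ B, P ω := by
  classical
  have key := AD (fun ω => if ω ∈ A then P ω else 0) (fun ω => if ω ∈ B then P ω else 0)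
    (fun ω => if ω ∈ A ∩ B then P ω else 0) P
    (fun ω => by split; exacts [h0 ω, le_rfl])
    (fun ω => by split; exacts [h0 ω, le_rfl])
    (fun ω => by split; exacts [h0 ω, le_rfl])
    h0 ?_
  · have hs : ∀ (S : Finset (Λ → Bool)),
        ∑ ω : Λ → Bool, (if ω ∈ S then P ω else 0) = ∑ ω ∈ S, P ω := by
      intro S
      rw [Finset.sum_ite_mem, Finset.univ_inter]
    rw [hs, hs, hs, h1, mul_one] at key
    exact key
  · intro ω ω'
    by_cases hωA : ω ∈ A
    · by_cases hω'B : ω' ∈ B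
      · have hj : (fun i => ω i || ω' i) ∈ A ∩ B := by
          rw [Finset.mem_inter]
          constructor
          · exact hA ω hωA _ (fun i => by cases ω i <;> simp)
          · exact hB ω' hω'B _ (fun i => by cases ω' i <;> simp [Bool.le_iff_imp])
        rw [if_pos hωA, if_pos hω'B, if_pos hj]
        exact hfkg ω ω'
      · rw [if_neg hω'B, mul_zero]
        split <;> [exact mul_nonneg (h0 _) (h0 _); exact mul_nonneg le_rfl (h0 _)]
    · rw [if_neg hωA, zero_mul]
      split <;> [exact mul_nonneg (h0 _) (h0 _); exact mul_nonneg le_rfl (h0 _)]
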